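/- Let G be a graph with n vertices and m edges and let α ∈ [0,1]. Then the largest eigenvalue λ_α(G) of A_α(G) satisfies 2m/n ≤ λ_α(G) ≤ max over edges uv of (α·deg(u) + (1−α)·deg(v)), and the lower bound is attained with equality if and only if G is regular. -/

import Mathlib

open scoped Classical

/-- The matrix `A_α(G) = α·D(G) + (1−α)·A(G)` over `ℝ`. -/
noncomputable def Aalpha {V : Type*} [Fintype V] (G : SimpleGraph V) (α : ℝ) : Matrix V V ℝ :=
  α • Matrix.diagonal (fun v => (G.degree v : ℝ)) +
    (1 - α) • (Matrix.of fun i j => if G.Adj i j then (1 : ℝ) else 0)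

/-- `lam` is the largest real eigenvalue (spectral radius) of the real symmetric matrix `M`. -/
def IsSpectralRadius {V : Type*} [Fintype V] (M : Matrix V V ℝ) (lam : ℝ) : Prop :=
  (∃ x : V → ℝ, x ≠ 0 ∧ M.mulVec x = lam • x) ∧
    ∀ μ : ℝ, (∃ x : V → ℝ, x ≠ 0 ∧ M.mulVec x = μ • x) → μ ≤ lam

open Matrix Finset

section Helpers

variable {V : Type*} [Fintype V]

lemma aalpha_eq (G : SimpleGraph V) (α : ℝ) :
    Aalpha G α = α • Matrix.diagonal (fun v => (G.degree v : ℝ)) + (1 - α) • G.adjMatrix ℝ := by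
  ext i j
  simp [Aalpha, SimpleGraph.adjMatrix]

lemma aalpha_mulVec (G : SimpleGraph V) (α : ℝ) (x : V → ℝ) (u : V) :
    (Aalpha G α).mulVec x u
      = α * (G.degree u : ℝ) * x u + (1 - α) * ∑ w ∈ G.neighborFinset u, x w := by
  rw [aalpha_eq]
  simp [Matrix.add_mulVec, Matrix.smul_mulVec, Matrix.mulVec_diagonal, mul_assoc]

lemma aalpha_isHermitian (G : SimpleGraph V) (α : ℝ) : (Aalpha G α).IsHermitian := by
  ext i j
  simp only [Aalpha, conjTranspose_apply, Matrix.add_apply, Matrix.smul_apply, of_apply,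
    Matrix.diagonal_apply, star_trivial, smul_eq_mul]
  rw [G.adj_comm]
  rcases eq_or_ne i j with rfl | h
  · rfl
  · simp [h, h.symm]

lemma sum_neighbors_le (G : SimpleGraph V) (y : V → ℝ) (u : V) (b : ℝ)
    (hb : ∀ w ∈ G.neighborFinset u, y w ≤ b) :
    ∑ w ∈ G.neighborFinset u, y w ≤ (G.degree u : ℝ) * b := by
  have := Finset.sum_le_card_nsmul (G.neighborFinset u) y b hb
  rwa [SimpleGraph.card_neighborFinset_eq_degree, nsmul_eq_mul] at this

lemma rayleigh_key {M : Matrix V V ℝ} (hM : M.IsHermitian) {lam : ℝ}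
    (h : ∀ μ : ℝ, (∃ x : V → ℝ, x ≠ 0 ∧ M.mulVec x = μ • x) → μ ≤ lam) (x : V → ℝ) :
    x ⬝ᵥ M.mulVec x ≤ lam * (x ⬝ᵥ x) ∧
      (x ⬝ᵥ M.mulVec x = lam * (x ⬝ᵥ x) → M.mulVec x = lam • x) := by
  classical
  set b := hM.eigenvectorBasis with hb
  set ev := hM.eigenvalues with hev
  have heig : ∀ i, ev i ≤ lam := by
    intro i
    refine h _ ⟨b i, ?_, hM.mulVec_eigenvectorBasis i⟩
    intro hz
    exact b.orthonormal.ne_zero i (by ext j; exact congrFun hz j)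
  set X : EuclideanSpace ℝ V := WithLp.toLp 2 x with hX
  set Y : EuclideanSpace ℝ V := WithLp.toLp 2 (M.mulVec x) with hY
  set c : V → ℝ := fun i => b.repr X i with hc
  have hsym := (Matrix.isHermitian_iff_isSymmetric.mp hM)
  have hreprY : ∀ i, b.repr Y i = ev i * c i := by
    intro i
    simp only [hc]
    rw [OrthonormalBasis.repr_apply_apply, OrthonormalBasis.repr_apply_apply]
    have hY' : Y = Matrix.toEuclideanLin M X := rfl
    rw [hY', ← hsym (b i) X]
    have hbi : Matrix.toEuclideanLin M (b i) = ev i • b i := by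
      have := hM.mulVec_eigenvectorBasis i
      ext j; exact congrFun this j
    rw [hbi, real_inner_smul_left]
  have hinner1 : x ⬝ᵥ M.mulVec x = inner (𝕜 := ℝ) X Y := by
    simp [PiLp.inner_apply, dotProduct, RCLike.inner_apply, hX, hY]
    exact Finset.sum_congr rfl fun i _ => mul_comm _ _
  have hinner2 : x ⬝ᵥ x = inner (𝕜 := ℝ) X X := by
    simp [PiLp.inner_apply, dotProduct, hX]
    rw [EuclideanSpace.norm_sq_eq]; simp [Real.norm_eq_abs, sq_abs, sq]
  have hXY : inner (𝕜 := ℝ) X Y = ∑ i, ev i * c i ^ 2 := by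
    rw [← b.repr.inner_map_map X Y]
    simp only [PiLp.inner_apply, RCLike.inner_apply]
    refine Finset.sum_congr rfl fun i _ => ?_
    rw [hreprY i]
    ring_nf
    simp [hc]
    ring
  have hXX : inner (𝕜 := ℝ) X X = ∑ i, c i ^ 2 := by
    rw [← b.repr.inner_map_map X X]
    simp only [PiLp.inner_apply, RCLike.inner_apply]
    refine Finset.sum_congr rfl fun i _ => ?_
    simp [hc, sq]
  have key : lam * (x ⬝ᵥ x) - x ⬝ᵥ M.mulVec x = ∑ i, (lam - ev i) * c i ^ 2 := by
    rw [hinner1, hinner2, hXY, hXX, Finset.mul_sum, ← Finset.sum_sub_distrib]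
    refine Finset.sum_congr rfl fun i _ => by ring
  have hnn : ∀ i ∈ Finset.univ, (0:ℝ) ≤ (lam - ev i) * c i ^ 2 := fun i _ =>
    mul_nonneg (by linarith [heig i]) (sq_nonneg _)
  constructor
  · nlinarith [Finset.sum_nonneg hnn, key]
  · intro heq
    have hzero : ∀ i ∈ Finset.univ, (lam - ev i) * c i ^ 2 = 0 := by
      apply (Finset.sum_eq_zero_iff_of_nonneg hnn).mp
      rw [← key, heq]; ring
    have hevc : ∀ i, ev i * c i = lam * c i := by
      intro i
      rcases mul_eq_zero.mp (hzero i (Finset.mem_univ i)) with h1 | h2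
      · have : ev i = lam := by linarith
        rw [this]
      · have : c i = 0 := sq_eq_zero_iff.mp h2
        rw [this]; ring
    have hYlX : Y = lam • X := by
      apply b.repr.injective
      ext i
      rw [LinearIsometryEquiv.map_smul]
      simp only [PiLp.smul_apply, smul_eq_mul]
      rw [hreprY i, hevc i]
    exact funext fun j => congrFun (congrArg WithLp.ofLp hYlX) j

lemma exists_pos_max_eigenvector [Nonempty V] {M : Matrix V V ℝ} {lam : ℝ}
    (hx : ∃ x : V → ℝ, x ≠ 0 ∧ M.mulVec x = lam • x) :
    ∃ y : V → ℝ, M.mulVec y = lam • y ∧ ∃ u, 0 < y u ∧ ∀ w, |y w| ≤ y u := by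
  obtain ⟨x, hx0, hxe⟩ := hx
  obtain ⟨u, -, hu⟩ := Finset.exists_max_image Finset.univ (fun w => |x w|)
    ⟨Classical.arbitrary V, Finset.mem_univ _⟩
  obtain ⟨w₀, hw₀⟩ := Function.ne_iff.mp hx0
  have hupos : 0 < |x u| := lt_of_lt_of_le (abs_pos.mpr hw₀) (hu w₀ (Finset.mem_univ _))
  rcases lt_trichotomy (x u) 0 with hneg | hzero | hpos
  · refine ⟨-x, ?_, u, ?_, ?_⟩
    · rw [Matrix.mulVec_neg, hxe, smul_neg]
    · simpa using neg_pos.mpr hneg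
    · intro w
      simpa [abs_of_neg hneg] using hu w (Finset.mem_univ w)
  · exact absurd hzero (by simpa [hzero] using hupos.ne')
  · refine ⟨x, hxe, u, hpos, fun w => ?_⟩
    simpa [abs_of_pos hpos] using hu w (Finset.mem_univ w)

end Helpers

theorem stmt2 {V : Type*} [Fintype V] [Nonempty V] (G : SimpleGraph V)
    (α : ℝ) (hα : α ∈ Set.Icc (0 : ℝ) 1)
    (lam : ℝ) (hlam : IsSpectralRadius (Aalpha G α) lam) :
    (2 * (G.edgeFinset.card : ℝ) / (Fintype.card V : ℝ) ≤ lam) ∧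
    (G.edgeFinset.Nonempty →
      ∃ u v : V, G.Adj u v ∧ lam ≤ α * (G.degree u : ℝ) + (1 - α) * (G.degree v : ℝ)) ∧
    (2 * (G.edgeFinset.card : ℝ) / (Fintype.card V : ℝ) = lam ↔
      ∃ d : ℕ, G.IsRegularOfDegree d) := by
  classical
  obtain ⟨hα0, hα1⟩ := hα
  have hαnn : (0:ℝ) ≤ 1 - α := by linarith
  have hn : (0:ℝ) < (Fintype.card V : ℝ) := by
    have h : 0 < Fintype.card V := Fintype.card_pos
    exact_mod_cast h
  have ray := rayleigh_key (aalpha_isHermitian G α) hlam.2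
  -- facts about the all-ones vector
  have hmul1 : ∀ u : V, (Aalpha G α).mulVec (fun _ => (1:ℝ)) u = (G.degree u : ℝ) := by
    intro u
    rw [aalpha_mulVec]
    simp only [Finset.sum_const, SimpleGraph.card_neighborFinset_eq_degree, nsmul_eq_mul,
      mul_one]
    ring
  have hdot1 : (fun _ => (1:ℝ)) ⬝ᵥ (Aalpha G α).mulVec (fun _ => (1:ℝ))
      = 2 * (G.edgeFinset.card : ℝ) := by
    simp only [dotProduct, one_mul, hmul1]
    rw [← Nat.cast_sum]
    rw [G.sum_degrees_eq_twice_card_edges]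
    push_cast
    ring
  have hdot2 : (fun _ => (1:ℝ) : V → ℝ) ⬝ᵥ (fun _ => (1:ℝ)) = (Fintype.card V : ℝ) := by
    simp [dotProduct]
  have hlow' : 2 * (G.edgeFinset.card : ℝ) ≤ lam * (Fintype.card V : ℝ) := by
    have := (ray (fun _ => (1:ℝ))).1
    rwa [hdot1, hdot2] at this
  have hlow : 2 * (G.edgeFinset.card : ℝ) / (Fintype.card V : ℝ) ≤ lam := by
    rw [div_le_iff₀ hn]; linarith
  -- a sign-normalized eigenvector with positive max entry
  obtain ⟨y, hy, u, hyu, hmax⟩ := exists_pos_max_eigenvector hlam.1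
  have heigu : ∀ w : V, lam * y w
      = α * (G.degree w : ℝ) * y w + (1 - α) * ∑ v ∈ G.neighborFinset w, y v := by
    intro w
    have := congrFun hy w
    rw [aalpha_mulVec] at this
    simpa using this.symm
  refine ⟨hlow, ?_, ?_⟩
  · -- upper bound over edges
    intro hne
    have hm : (0:ℝ) < (G.edgeFinset.card : ℝ) := by
      exact_mod_cast Finset.card_pos.mpr hne
    have hlampos : 0 < lam := lt_of_lt_of_le (by positivity) hlow
    have hdu : (0:ℝ) < (G.degree u : ℝ) := by
      rcases Nat.eq_zero_or_pos (G.degree u) with h0 | hp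
      · exfalso
        have hNu : G.neighborFinset u = ∅ := Finset.card_eq_zero.mp
          (by rw [SimpleGraph.card_neighborFinset_eq_degree]; exact h0)
        have h1 := heigu u
        rw [hNu, h0] at h1
        simp at h1
        rcases h1 with h1 | h1
        · exact hlampos.ne' h1
        · exact hyu.ne' h1
      · exact_mod_cast hp
    have hNune : (G.neighborFinset u).Nonempty := by
      rw [← Finset.card_pos, SimpleGraph.card_neighborFinset_eq_degree]
      exact_mod_cast hdu
    obtain ⟨v, hvmem, hvmax⟩ := Finset.exists_max_image (G.neighborFinset u) y hNune
    have hadj : G.Adj u v := by rwa [SimpleGraph.mem_neighborFinset] at hvmem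
    have hdv : (0:ℝ) ≤ (G.degree v : ℝ) := by positivity
    have hsum_u : ∑ w ∈ G.neighborFinset u, y w ≤ (G.degree u : ℝ) * y v :=
      sum_neighbors_le G y u (y v) hvmax
    have ineq1 : lam * y u ≤ α * (G.degree u : ℝ) * y u + (1 - α) * ((G.degree u : ℝ) * y v) := by
      rw [heigu u]
      have := mul_le_mul_of_nonneg_left hsum_u hαnn
      linarith
    by_cases hc1 : lam ≤ α * (G.degree u : ℝ)
    · exact ⟨u, v, hadj, by nlinarith⟩
    · push_neg at hc1
      have hyv : 0 < y v := by
        by_contra hyv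
        push_neg at hyv
        nlinarith [mul_pos (show (0:ℝ) < lam - α * (G.degree u : ℝ) by linarith) hyu,
          mul_nonpos_of_nonneg_of_nonpos (mul_nonneg hαnn hdu.le) hyv]
      have hsum_v : ∑ w ∈ G.neighborFinset v, y w ≤ (G.degree v : ℝ) * y u :=
        sum_neighbors_le G y v (y u) (fun w _ => (le_abs_self _).trans (hmax w))
      have ineq2 : lam * y v ≤ α * (G.degree v : ℝ) * y v + (1 - α) * ((G.degree v : ℝ) * y u) := by
        rw [heigu v]
        have := mul_le_mul_of_nonneg_left hsum_v hαnn
        linarith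
      by_cases hc2 : lam ≤ α * (G.degree v : ℝ)
      · exact ⟨v, u, hadj.symm, by nlinarith⟩
      · push_neg at hc2
        by_cases hc3 : lam ≤ α * (G.degree u : ℝ) + (1 - α) * (G.degree v : ℝ)
        · exact ⟨u, v, hadj, hc3⟩
        · push_neg at hc3
          refine ⟨v, u, hadj.symm, ?_⟩
          by_contra hc4
          push_neg at hc4
          have key1 : (lam - α * (G.degree u : ℝ)) * y u ≤ ((1 - α) * (G.degree u : ℝ)) * y v := by
            linarith
          have key2 : (lam - α * (G.degree v : ℝ)) * y v ≤ ((1 - α) * (G.degree v : ℝ)) * y u := by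
            linarith
          have q1 : ((1 - α) * (G.degree v : ℝ)) * y u < ((1 - α) * (G.degree u : ℝ)) * y v :=
            lt_of_lt_of_le (mul_lt_mul_of_pos_right (by linarith) hyu) key1
          have q2 : ((1 - α) * (G.degree u : ℝ)) * y v < ((1 - α) * (G.degree v : ℝ)) * y u :=
            lt_of_lt_of_le (mul_lt_mul_of_pos_right (by linarith) hyv) key2
          linarith
  · -- equality iff regular
    constructor
    · intro heq
      have heq' : (fun _ => (1:ℝ)) ⬝ᵥ (Aalpha G α).mulVec (fun _ => (1:ℝ))
          = lam * ((fun _ => (1:ℝ) : V → ℝ) ⬝ᵥ (fun _ => (1:ℝ))) := by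
        rw [hdot1, hdot2, ← (div_eq_iff hn.ne').mp heq]
      have heig := (ray (fun _ => (1:ℝ))).2 heq'
      have hdeg : ∀ w : V, (G.degree w : ℝ) = lam := by
        intro w
        have := congrFun heig w
        rw [hmul1 w] at this
        simpa using this
      refine ⟨G.degree (Classical.arbitrary V), fun w => ?_⟩
      have : (G.degree w : ℝ) = (G.degree (Classical.arbitrary V) : ℝ) := by
        rw [hdeg, hdeg]
      exact_mod_cast this
    · rintro ⟨d, hreg⟩
      have hle : lam ≤ (d : ℝ) := by
        have h1 := heigu u
        have h2 : ∑ w ∈ G.neighborFinset u, y w ≤ (G.degree u : ℝ) * y u :=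
          sum_neighbors_le G y u (y u) (fun w _ => (le_abs_self _).trans (hmax w))
        rw [hreg u] at h1 h2
        have h3 : lam * y u ≤ (d : ℝ) * y u := by
          have := mul_le_mul_of_nonneg_left h2 hαnn
          nlinarith
        exact le_of_mul_le_mul_right h3 hyu
      have hsumdeg : 2 * (G.edgeFinset.card : ℝ) = (Fintype.card V : ℝ) * d := by
        have h1 := G.sum_degrees_eq_twice_card_edges
        have h2 : ∑ w : V, G.degree w = Fintype.card V * d := by
          simp [hreg _, Finset.sum_const, Finset.card_univ, mul_comm]
        rw [h2] at h1
        exact_mod_cast h1.symm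
      have hdval : 2 * (G.edgeFinset.card : ℝ) / (Fintype.card V : ℝ) = (d : ℝ) := by
        rw [hsumdeg]
        field_simp
      rw [hdval]
      have hge : (d : ℝ) ≤ lam := hdval ▸ hlow
      linarith
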